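/- Let γ : ℝ → ℝ² be twice continuously differentiable with ‖γ'(s)‖ = 1 for all s and ‖γ''(s)‖ ≤ κ for all s, where κ > 0. Then for all s, t ∈ ℝ with |s − t| ≤ 1/(2κ): ‖γ(s) − γ(t)‖ ≥ (3/4)·|s − t|. -/

import Mathlib

open Set

/-- Local chord-arc bound: for arc-length separation at most 1/(2κ),
the chord is at least 3/4 of the arc. -/
theorem chord_local_lower_bound
    (γ : ℝ → EuclideanSpace ℝ (Fin 2)) (κ : ℝ) (hκ : 0 < κ)
    (hsmooth : ContDiff ℝ 2 γ)
    (hunit : ∀ s : ℝ, ‖deriv γ s‖ = 1)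
    (hcurv : ∀ s : ℝ, ‖deriv (deriv γ) s‖ ≤ κ) :
    ∀ s t : ℝ, |s - t| ≤ 1 / (2 * κ) → 3 / 4 * |s - t| ≤ ‖γ s - γ t‖ := by
  have hγ' : Differentiable ℝ γ := hsmooth.differentiable (by norm_num)
  have hdd : ContDiff ℝ 1 (deriv γ) := by
    exact ((contDiff_succ_iff_deriv (n := 1)).mp (by norm_num; exact hsmooth)).2.2
  have hγ'' : Differentiable ℝ (deriv γ) := hdd.differentiable one_ne_zero
  have hlip : ∀ a b : ℝ, ‖deriv γ a - deriv γ b‖ ≤ κ * |a - b| := by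
    intro a b
    have := Convex.norm_image_sub_le_of_norm_hasDerivWithin_le
      (f := deriv γ) (f' := deriv (deriv γ)) (s := univ) (C := κ)
      (fun x _ => (hγ'' x).hasDerivAt.hasDerivWithinAt)
      (fun x _ => hcurv x) convex_univ (mem_univ b) (mem_univ a)
    simpa [Real.norm_eq_abs] using this
  intro s t hst
  set m := (s + t) / 2 with hm
  set v := deriv γ m with hv
  have key : ‖(γ s - s • v) - (γ t - t • v)‖ ≤ κ * (|s - t| / 2) * ‖s - t‖ := by
    apply Convex.norm_image_sub_le_of_norm_hasDerivWithin_le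
      (f := fun u => γ u - u • v) (f' := fun u => deriv γ u - v)
      (s := uIcc t s) ?hd ?hb (convex_uIcc t s) left_mem_uIcc right_mem_uIcc
    · intro x _
      exact (((hγ' x).hasDerivAt).sub
        (by simpa using (hasDerivAt_id x).smul_const v)).hasDerivWithinAt
    · intro x hx
      have h1 : ‖deriv γ x - v‖ ≤ κ * |x - m| := hlip x m
      have h2 : |x - m| ≤ |s - t| / 2 := by
        rw [abs_le]
        rcases le_total t s with h | h
        · rw [uIcc_of_le h] at hx
          rw [abs_of_nonneg (by linarith : (0:ℝ) ≤ s - t)]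
          constructor <;> simp only [hm] <;> linarith [hx.1, hx.2]
        · rw [uIcc_of_ge h] at hx
          rw [abs_of_nonpos (by linarith : s - t ≤ (0:ℝ))]
          constructor <;> simp only [hm] <;> linarith [hx.1, hx.2]
      calc ‖deriv γ x - v‖ ≤ κ * |x - m| := h1
        _ ≤ κ * (|s - t| / 2) := by nlinarith [abs_nonneg (x - m)]
  have hnv : ‖(s - t) • v‖ = |s - t| := by
    rw [norm_smul, Real.norm_eq_abs, hunit m, mul_one]
  have hdiff : (γ s - s • v) - (γ t - t • v) = (γ s - γ t) - (s - t) • v := by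
    rw [sub_smul]; abel
  have hlow : |s - t| - κ * (|s - t| / 2) * |s - t| ≤ ‖γ s - γ t‖ := by
    have h3 : ‖(s - t) • v‖ - ‖γ s - γ t‖ ≤ ‖(s - t) • v - (γ s - γ t)‖ :=
      norm_sub_norm_le _ _
    have h4 : ‖(s - t) • v - (γ s - γ t)‖ = ‖(γ s - s • v) - (γ t - t • v)‖ := by
      rw [hdiff, norm_sub_rev]
    rw [hnv, h4] at h3
    have := key
    rw [Real.norm_eq_abs] at this
    linarith
  have hk : κ * |s - t| ≤ 1 / 2 := by
    rw [le_div_iff₀ (by positivity : (0:ℝ) < 2 * κ)] at hst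
    nlinarith
  nlinarith [abs_nonneg (s - t), hlow]
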